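/- Let p ≥ 3 be a prime, α ≥ 2 and m ≥ 2 integers, and n an integer with gcd(n,p)=1. Then Σ_{χ mod p^α} |G(n,χ;p^α)|^{2m} = 4^{m-1} · φ(p^α)² · p^{(m-1)α}, where the sum is over all Dirichlet characters mod p^α. -/

import Mathlib

open Complex

/-- The generalized quadratic Gauss sum `G(n,χ;q) = Σ_{a=1}^{q} χ(a)·e(n·a²/q)`. -/
noncomputable def Ggen (n : ℤ) (q : ℕ) (χ : DirichletCharacter ℂ q) : ℂ :=
  ∑ a ∈ Finset.Icc 1 q,
    χ (a : ZMod q) * Complex.exp (2 * Real.pi * Complex.I * (n * (a : ℂ) ^ 2 / (q : ℂ)))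

open Finset



lemma one_add_pow_of_sq_zero {R : Type*} [CommRing R] {x : R} (h : x ^ 2 = 0) (m : ℕ) :
    (1 + x) ^ m = 1 + (m : R) * x := by
  induction m with
  | zero => simp
  | succ k ih =>
    rw [pow_succ, ih]
    have : (1 + (k:R) * x) * (1 + x) = 1 + ((k:R)+1) * x + (k:R) * x^2 := by ring
    rw [this, h]
    push_cast
    ring

lemma sum_eq_sum_units {N : ℕ} [NeZero N] (f : ZMod N → ℂ) (h : ∀ x, ¬IsUnit x → f x = 0) :
    ∑ x : ZMod N, f x = ∑ u : (ZMod N)ˣ, f u := by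
  classical
  rw [← Finset.sum_filter_of_ne (p := fun x => IsUnit x) (by intro x _ hfx; by_contra hx; exact hfx (h x hx))]
  refine (Finset.sum_bij (fun (u : (ZMod N)ˣ) _ => (u : ZMod N)) ?_ ?_ ?_ ?_).symm
  · intro u _; simp [Finset.mem_filter, u.isUnit]
  · intro a _ b _ hab; exact Units.ext hab
  · intro x hx; simp only [Finset.mem_filter] at hx
    exact ⟨hx.2.unit, Finset.mem_univ _, rfl⟩
  · intro u _; rfl

lemma Ggen_eq {q : ℕ} [NeZero q] (n : ℤ) (χ : DirichletCharacter ℂ q) :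
    Ggen n q χ = ∑ u : (ZMod q)ˣ,
      χ u * ZMod.stdAddChar ((n : ZMod q) * (u : ZMod q) ^ 2) := by
  classical
  have key : ∀ x : ZMod q, χ x * ZMod.stdAddChar ((n : ZMod q) * x ^ 2)
      = χ x * ZMod.stdAddChar ((n : ZMod q) * x ^ 2) := fun _ => rfl
  rw [← sum_eq_sum_units (fun x => χ x * ZMod.stdAddChar ((n : ZMod q) * x ^ 2))
      (fun x hx => by rw [χ.map_nonunit hx, zero_mul])]
  -- now: Ggen n q χ = ∑ x : ZMod q, ...
  rw [Ggen]
  refine Finset.sum_bij (fun (a : ℕ) _ => (a : ZMod q)) ?_ ?_ ?_ ?_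
  · intro a _; exact Finset.mem_univ _
  · intro a ha b hb hab
    simp only [Finset.mem_Icc] at ha hb
    rw [ZMod.natCast_eq_natCast_iff'] at hab
    have hq : 0 < q := Nat.pos_of_ne_zero (NeZero.ne q)
    rcases lt_or_eq_of_le ha.2 with h1 | h1 <;> rcases lt_or_eq_of_le hb.2 with h2 | h2
    · rwa [Nat.mod_eq_of_lt h1, Nat.mod_eq_of_lt h2] at hab
    · rw [Nat.mod_eq_of_lt h1, h2, Nat.mod_self] at hab; omega
    · rw [Nat.mod_eq_of_lt h2, h1, Nat.mod_self] at hab; omega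
    · omega
  · intro x _
    refine ⟨if x.val = 0 then q else x.val, ?_, ?_⟩
    · simp only [Finset.mem_Icc]
      rcases eq_or_ne x.val 0 with h | h
      · simp [h, Nat.one_le_iff_ne_zero, NeZero.ne q]
      · simp [h, Nat.one_le_iff_ne_zero, (x.val_lt).le]
    · rcases eq_or_ne x.val 0 with h | h
      · simp only [h, if_pos rfl, ZMod.natCast_self]
        rw [← x.natCast_zmod_val, h, Nat.cast_zero]
      · simp [h, x.natCast_zmod_val]
  · intro a ha
    congr 1
    have : ((n : ZMod q) * (a : ZMod q) ^ 2) = (((n * a ^ 2 : ℤ) : ZMod q)) := by push_cast; ring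
    rw [this, ZMod.stdAddChar_coe]
    congr 1
    have hq : (q : ℂ) ≠ 0 := Nat.cast_ne_zero.mpr (NeZero.ne q)
    push_cast
    ring


lemma geom_sum_root (z : ℂ) (P : ℕ) (hz : z ^ P = 1) :
    ∑ t ∈ range P, z ^ t = if z = 1 then (P : ℂ) else 0 := by
  split_ifs with h
  · simp [h]
  · rw [geom_sum_eq h, hz]; simp

lemma castHom_zero_iff {m n : ℕ} [NeZero n] (h : m ∣ n) (y : ZMod n) :
    ZMod.castHom h (ZMod m) y = 0 ↔ m ∣ y.val := by
  conv_lhs => rw [← ZMod.natCast_zmod_val y]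
  rw [map_natCast, ZMod.natCast_eq_zero_iff]


variable {p : ℕ} [hpp : Fact p.Prime] {α : ℕ}

instance : NeZero (p ^ α) := ⟨pow_ne_zero _ hpp.out.ne_zero⟩

lemma pmul_zero_iff (hα : 1 ≤ α) (y : ZMod (p ^ α)) :
    (p : ZMod (p ^ α)) ^ (α - 1) * y = 0 ↔
      ZMod.castHom (dvd_pow_self p (by omega : α ≠ 0)) (ZMod p) y = 0 := by
  rw [castHom_zero_iff]
  conv_lhs => rw [← ZMod.natCast_zmod_val y]
  rw [show ((p : ZMod (p ^ α)) ^ (α - 1) * ((y.val : ℕ) : ZMod (p ^ α)))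
      = ((p ^ (α - 1) * y.val : ℕ) : ZMod (p ^ α)) by push_cast; ring,
    ZMod.natCast_eq_zero_iff]
  have hgen : ∀ K : ℕ, (p ^ α ∣ p ^ (α - 1) * K ↔ p ∣ K) := by
    intro K
    rw [show p ^ α = p ^ (α - 1) * p by rw [← pow_succ]; congr 1; omega,
      Nat.mul_dvd_mul_iff_left (pow_pos hpp.out.pos _)]
  exact hgen _

/-- inner sum `F(c)` -/
noncomputable def Fc (q : ℕ) [NeZero q] (n : ℤ) (c : (ZMod q)ˣ) : ℂ :=
  ∑ b : (ZMod q)ˣ,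
    ZMod.stdAddChar ((n : ZMod q) * (((c : ZMod q) ^ 2 - 1)) * (b : ZMod q) ^ 2)

lemma Fc_eq_zero_aux (hp : 3 ≤ p) (hα : 2 ≤ α) {n : ℤ} (hn : IsCoprime n (p : ℤ))
    (c : (ZMod (p ^ α))ˣ) (v k₀ : ℕ) (hpk₀ : ¬ p ∣ k₀) (hvle : v ≤ α - 2)
    (hd : ((c : ZMod (p ^ α)) ^ 2 - 1) = ((p ^ v * k₀ : ℕ) : ZMod (p ^ α))) :
    Fc (p ^ α) n c = 0 := by
  classical
  have hα1 : 1 ≤ α := by omega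
  set d : ZMod (p ^ α) := (c : ZMod (p ^ α)) ^ 2 - 1 with hddef
  set j := α - 1 - v with hj
  have hj1 : 1 ≤ j := by omega
  have hvj : v + j = α - 1 := by omega
  -- the auxiliary units
  have hcop : ∀ s : ℕ, Nat.Coprime (1 + p ^ j * s) (p ^ α) := by
    intro s
    refine Nat.Coprime.pow_right _ ?_
    have hnd : ¬ p ∣ (1 + p ^ j * s) := by
      intro hdvd
      have h1 : p ∣ p ^ j * s := Dvd.dvd.mul_right (dvd_pow_self p (by omega)) s
      have : p ∣ 1 := by rwa [add_comm, Nat.dvd_add_right h1] at hdvd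
      have := Nat.le_of_dvd one_pos this; omega
    exact Nat.coprime_comm.mp ((Nat.Prime.coprime_iff_not_dvd hpp.out).mpr hnd)
  set w : ℕ → (ZMod (p ^ α))ˣ := fun s => ZMod.unitOfCoprime _ (hcop s) with hw
  have hwcast : ∀ s : ℕ, ((w s : ZMod (p ^ α))) = 1 + (p : ZMod (p ^ α)) ^ j * (s : ZMod (p ^ α)) := by
    intro s
    rw [hw]
    simp only [ZMod.coe_unitOfCoprime]
    push_cast
    ring
  -- key claims
  have claim1 : d * (p : ZMod (p ^ α)) ^ (2 * j) = 0 := by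
    rw [hd, show (((p ^ v * k₀ : ℕ) : ZMod (p ^ α)) * (p : ZMod (p ^ α)) ^ (2 * j))
        = ((p ^ v * k₀ * p ^ (2 * j) : ℕ) : ZMod (p ^ α)) by push_cast; ring,
      ZMod.natCast_eq_zero_iff,
      show p ^ v * k₀ * p ^ (2 * j) = p ^ (v + 2 * j) * k₀ by rw [pow_add]; ring]
    exact Dvd.dvd.mul_right (pow_dvd_pow p (by omega)) k₀
  have claim2 : d * (p : ZMod (p ^ α)) ^ j = (p : ZMod (p ^ α)) ^ (α - 1) * (k₀ : ZMod (p ^ α)) := by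
    rw [hd, show (((p ^ v * k₀ : ℕ) : ZMod (p ^ α)) * (p : ZMod (p ^ α)) ^ j)
        = ((p ^ v * k₀ * p ^ j : ℕ) : ZMod (p ^ α)) by push_cast; ring,
      show p ^ v * k₀ * p ^ j = p ^ (α - 1) * k₀ by rw [← hvj, pow_add]; ring]
    push_cast; ring
  -- the quantity y b
  set y : (ZMod (p ^ α))ˣ → ZMod (p ^ α) := fun b =>
    (p : ZMod (p ^ α)) ^ (α - 1) * (2 * (n : ZMod (p ^ α)) * (k₀ : ZMod (p ^ α)) * (b : ZMod (p ^ α)) ^ 2) with hy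
  -- per-(s,b) identity
  have key : ∀ (s : ℕ) (b : (ZMod (p ^ α))ˣ),
      ZMod.stdAddChar ((n : ZMod (p ^ α)) * d * ((b * w s : (ZMod (p ^ α))ˣ) : ZMod (p ^ α)) ^ 2)
        = ZMod.stdAddChar ((n : ZMod (p ^ α)) * d * (b : ZMod (p ^ α)) ^ 2)
          * ZMod.stdAddChar (y b) ^ s := by
    intro s b
    have hws : ((b * w s : (ZMod (p ^ α))ˣ) : ZMod (p ^ α)) = (b : ZMod (p ^ α)) * (w s : ZMod (p ^ α)) := rfl
    have expand : (n : ZMod (p ^ α)) * d * ((b : ZMod (p ^ α)) * (w s : ZMod (p ^ α))) ^ 2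
        = (n : ZMod (p ^ α)) * d * (b : ZMod (p ^ α)) ^ 2 + (s : ZMod (p ^ α)) * y b := by
      rw [hwcast s, hy]
      have e1 : (n : ZMod (p ^ α)) * d * ((b : ZMod (p ^ α)) * (1 + (p : ZMod (p ^ α)) ^ j * (s : ZMod (p ^ α)))) ^ 2
          = (n : ZMod (p ^ α)) * d * (b : ZMod (p ^ α)) ^ 2
            + (2 * (n : ZMod (p ^ α)) * (b : ZMod (p ^ α)) ^ 2 * (s : ZMod (p ^ α))) * (d * (p : ZMod (p ^ α)) ^ j)
            + ((n : ZMod (p ^ α)) * (b : ZMod (p ^ α)) ^ 2 * (s : ZMod (p ^ α)) ^ 2) * (d * (p : ZMod (p ^ α)) ^ (2 * j)) := by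
        ring
      rw [e1, claim1, claim2]
      ring
    rw [hws, expand, AddChar.map_add_eq_mul]
    congr 1
    rw [show ((s : ZMod (p ^ α)) * y b) = s • y b by rw [nsmul_eq_mul], AddChar.map_nsmul_eq_pow]
  -- ψ (y b) is a nontrivial p-th root of unity
  have hroot : ∀ b : (ZMod (p ^ α))ˣ, ZMod.stdAddChar (y b) ^ p = 1 := by
    intro b
    rw [← AddChar.map_nsmul_eq_pow, nsmul_eq_mul]
    have hpc : (p : ZMod (p ^ α)) * (p : ZMod (p ^ α)) ^ (α - 1) = 0 := by
      rw [← pow_succ', show α - 1 + 1 = α by omega,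
        show ((p : ZMod (p ^ α))) ^ α = ((p ^ α : ℕ) : ZMod (p ^ α)) by push_cast; rfl,
        ZMod.natCast_self]
    have : (p : ZMod (p ^ α)) * y b = 0 := by
      rw [hy]
      simp only []
      rw [← mul_assoc, hpc, zero_mul]
    rw [this, AddChar.map_zero_eq_one]
  have hne1 : ∀ b : (ZMod (p ^ α))ˣ, ZMod.stdAddChar (y b) ≠ 1 := by
    intro b h1
    have h0 : y b = 0 := by
      have := ZMod.injective_stdAddChar (N := p ^ α)
      have h2 : ZMod.stdAddChar (y b) = ZMod.stdAddChar (0 : ZMod (p ^ α)) := by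
        rw [h1, AddChar.map_zero_eq_one]
      exact this h2
    rw [hy] at h0
    rw [pmul_zero_iff hα1] at h0
    set π := ZMod.castHom (dvd_pow_self p (by omega : α ≠ 0)) (ZMod p) with hπ
    rw [map_mul, map_mul, map_mul, map_pow, map_ofNat] at h0
    have hπn : (π ((n : ZMod (p ^ α)))) = ((n : ZMod p)) := by rw [hπ]; simp
    have hπk : (π ((k₀ : ZMod (p ^ α)))) = ((k₀ : ZMod p)) := by rw [hπ]; simp
    rw [hπn, hπk] at h0
    -- now a product of nonzero elements of the field ZMod p is zero
    have hp2 : ((2 : ZMod p)) ≠ 0 := by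
      have : ((2 : ℕ) : ZMod p) ≠ 0 := by
        rw [Ne, ZMod.natCast_eq_zero_iff]
        intro h; have := Nat.le_of_dvd (by norm_num) h; omega
      simpa using this
    have hpn : ((n : ZMod p)) ≠ 0 := by
      rw [Ne, ZMod.intCast_zmod_eq_zero_iff_dvd]
      intro h
      have := IsCoprime.isUnit_of_dvd' hn h dvd_rfl
      rw [Int.isUnit_iff] at this
      omega
    have hpk : ((k₀ : ZMod p)) ≠ 0 := by
      rw [Ne, ZMod.natCast_eq_zero_iff]; exact hpk₀
    have hpb : (π ((b : ZMod (p ^ α)))) ≠ 0 := by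
      have : IsUnit (π ((b : ZMod (p ^ α)))) := (b.isUnit).map π
      exact this.ne_zero
    exact (mul_ne_zero (mul_ne_zero (mul_ne_zero hp2 hpn) hpk) (pow_ne_zero 2 hpb)) h0
  -- now average over s
  have main : (p : ℂ) * Fc (p ^ α) n c = 0 := by
    have reindex : ∀ s : ℕ, Fc (p ^ α) n c
        = ∑ b : (ZMod (p ^ α))ˣ,
            ZMod.stdAddChar ((n : ZMod (p ^ α)) * d * ((b * w s : (ZMod (p ^ α))ˣ) : ZMod (p ^ α)) ^ 2) := by
      intro s
      rw [Fc]
      exact (Fintype.sum_bijective (· * w s) (Group.mulRight_bijective (w s)) _ _ (fun b => rfl)).symm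
    calc (p : ℂ) * Fc (p ^ α) n c = ∑ s ∈ range p, Fc (p ^ α) n c := by
          rw [Finset.sum_const, card_range, nsmul_eq_mul]
    _ = ∑ s ∈ range p, ∑ b : (ZMod (p ^ α))ˣ,
          ZMod.stdAddChar ((n : ZMod (p ^ α)) * d * (b : ZMod (p ^ α)) ^ 2) * ZMod.stdAddChar (y b) ^ s := by
        refine Finset.sum_congr rfl (fun s _ => ?_)
        rw [reindex s]
        exact Finset.sum_congr rfl (fun b _ => key s b)
    _ = ∑ b : (ZMod (p ^ α))ˣ,
          ZMod.stdAddChar ((n : ZMod (p ^ α)) * d * (b : ZMod (p ^ α)) ^ 2) * ∑ s ∈ range p, ZMod.stdAddChar (y b) ^ s := by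
        rw [Finset.sum_comm]
        exact Finset.sum_congr rfl (fun b _ => by rw [Finset.mul_sum])
    _ = 0 := by
        refine Finset.sum_eq_zero (fun b _ => ?_)
        rw [geom_sum_root _ _ (hroot b), if_neg (hne1 b), mul_zero]
  have hpne : (p : ℂ) ≠ 0 := Nat.cast_ne_zero.mpr (by omega)
  exact (mul_eq_zero.mp main).resolve_left hpne

lemma Fc_eq_zero (hp : 3 ≤ p) (hα : 2 ≤ α) {n : ℤ} (hn : IsCoprime n (p : ℤ))
    (c : (ZMod (p ^ α))ˣ)
    (hc : ¬ (p ^ (α - 1) ∣ (((c : ZMod (p ^ α)) ^ 2 - 1).val))) :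
    Fc (p ^ α) n c = 0 := by
  have hk0 : ((c : ZMod (p ^ α)) ^ 2 - 1).val ≠ 0 := by
    intro h
    exact hc (by rw [h]; exact dvd_zero _)
  refine Fc_eq_zero_aux hp hα hn c ((((c : ZMod (p ^ α)) ^ 2 - 1).val).factorization p)
    ((((c : ZMod (p ^ α)) ^ 2 - 1).val) / p ^ ((((c : ZMod (p ^ α)) ^ 2 - 1).val).factorization p))
    (Nat.not_dvd_ordCompl hpp.out hk0) ?_ ?_
  · by_contra hvle
    exact hc (dvd_trans (pow_dvd_pow p (by omega)) (Nat.ordProj_dvd _ p))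
  · rw [Nat.ordProj_mul_ordCompl_eq_self _ p, ZMod.natCast_zmod_val]


/-- `x = p^(α-1)` in `ZMod (p^α)`. -/
noncomputable def xq (p α : ℕ) : ZMod (p ^ α) := (p : ZMod (p ^ α)) ^ (α - 1)

omit hpp in
lemma xq_sq (hα : 2 ≤ α) : xq p α ^ 2 = 0 := by
  rw [xq, ← pow_mul]
  have h1 : ((p : ZMod (p ^ α))) ^ ((α - 1) * 2) = ((p ^ ((α - 1) * 2) : ℕ) : ZMod (p ^ α)) := by
    push_cast; rfl
  rw [h1, ZMod.natCast_eq_zero_iff]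
  exact pow_dvd_pow p (by omega)

lemma xq_ne_zero (hα : 2 ≤ α) : xq p α ≠ 0 := by
  rw [xq, show ((p : ZMod (p ^ α))) ^ (α - 1) = ((p ^ (α - 1) : ℕ) : ZMod (p ^ α)) by push_cast; rfl,
    Ne, ZMod.natCast_eq_zero_iff]
  intro h
  have h1 := Nat.le_of_dvd (pow_pos hpp.out.pos _) h
  have h2 : p ^ (α - 1) < p ^ α := Nat.pow_lt_pow_right hpp.out.one_lt (by omega)
  omega

omit hpp in
lemma p_mul_xq (hα : 2 ≤ α) : (p : ZMod (p ^ α)) * xq p α = 0 := by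
  rw [xq, ← pow_succ', show α - 1 + 1 = α by omega,
    show ((p : ZMod (p ^ α))) ^ α = ((p ^ α : ℕ) : ZMod (p ^ α)) by push_cast; rfl,
    ZMod.natCast_self]

/-- the unit `1 + p^(α-1)` of `ZMod (p^α)`. -/
noncomputable def u1 (hα : 2 ≤ α) : (ZMod (p ^ α))ˣ :=
  ⟨1 + xq p α, 1 - xq p α,
    by rw [show (1 + xq p α) * (1 - xq p α) = 1 - xq p α ^ 2 by ring, xq_sq hα, sub_zero],
    by rw [show (1 - xq p α) * (1 + xq p α) = 1 - xq p α ^ 2 by ring, xq_sq hα, sub_zero]⟩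

omit hpp in
lemma u1_pow_cast (hα : 2 ≤ α) (t : ℕ) :
    ((u1 (p := p) hα ^ t : (ZMod (p ^ α))ˣ) : ZMod (p ^ α)) = 1 + (t : ZMod (p ^ α)) * xq p α := by
  rw [Units.val_pow_eq_pow_val]
  exact one_add_pow_of_sq_zero (xq_sq hα) t

omit hpp in
lemma u1_pow_p (hα : 2 ≤ α) : u1 (p := p) hα ^ p = 1 := by
  ext
  rw [u1_pow_cast hα, Units.val_one, p_mul_xq hα, add_zero]

lemma u1_ne_one (hα : 2 ≤ α) : u1 (p := p) hα ≠ 1 := by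
  intro h
  have h2 : (1 : ZMod (p ^ α)) + xq p α = 1 := by
    have : ((u1 (p := p) hα : (ZMod (p ^ α))ˣ) : ZMod (p ^ α)) = 1 := by rw [h, Units.val_one]
    exact this
  exact xq_ne_zero hα (by rwa [add_eq_left] at h2)

lemma orderOf_u1 (hα : 2 ≤ α) : orderOf (u1 (p := p) hα) = p :=
  orderOf_eq_prime (u1_pow_p hα) (u1_ne_one hα)

/-- `xq * (z : ZMod (p^α))` only depends on `z` mod `p`. -/
lemma xq_mul_int (hα : 2 ≤ α) (z : ℤ) :
    xq p α * ((z : ℤ) : ZMod (p ^ α)) = xq p α * (((z % p).toNat : ℕ) : ZMod (p ^ α)) := by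
  have hppos : (0 : ℤ) < p := by exact_mod_cast hpp.out.pos
  have hzmod : ((z % p).toNat : ℤ) = z % p := Int.toNat_of_nonneg (Int.emod_nonneg z (by positivity))
  have step : ((z - (z % p).toNat : ℤ) : ZMod (p ^ α)) = (p : ZMod (p ^ α)) * (((z / p) : ℤ) : ZMod (p ^ α)) := by
    rw [show (z - ((z % p).toNat : ℤ)) = p * (z / p) by rw [hzmod, Int.emod_def]; ring]
    push_cast; ring
  have h0 : xq p α * (((z : ℤ) : ZMod (p ^ α)) - (((z % p).toNat : ℕ) : ZMod (p ^ α))) = 0 := by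
    rw [show (((z : ℤ) : ZMod (p ^ α)) - (((z % p).toNat : ℕ) : ZMod (p ^ α))) = ((z - (z % p).toNat : ℤ) : ZMod (p ^ α)) by push_cast; ring,
      step,
      show xq p α * ((p : ZMod (p ^ α)) * (((z / p) : ℤ) : ZMod (p ^ α)))
        = ((p : ZMod (p ^ α)) * xq p α) * (((z / p) : ℤ) : ZMod (p ^ α)) by ring,
      p_mul_xq hα, zero_mul]
  rw [mul_sub] at h0
  exact sub_eq_zero.mp h0

/-- Lemma D: classification of units whose square is 1 mod `p^(α-1)`. -/
lemma unit_classification (hp : 3 ≤ p) (hα : 2 ≤ α) (c : (ZMod (p ^ α))ˣ)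
    (hc : p ^ (α - 1) ∣ (((c : ZMod (p ^ α)) ^ 2 - 1).val)) :
    ∃ t < p, c = u1 (p := p) hα ^ t ∨ c = - u1 (p := p) hα ^ t := by
  classical
  set C : ℤ := (((c : ZMod (p ^ α)).val : ℕ) : ℤ) with hC
  have hCcast : ((C : ℤ) : ZMod (p ^ α)) = (c : ZMod (p ^ α)) := by
    rw [hC]; push_cast; exact ZMod.natCast_zmod_val _
  have hdvd : ((p : ℤ) ^ (α - 1)) ∣ C ^ 2 - 1 := by
    obtain ⟨m, hm⟩ := hc
    have h1 : ((C ^ 2 - 1 : ℤ) : ZMod (p ^ α)) = (((p ^ (α - 1) * m : ℕ) : ZMod (p ^ α))) := by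
      rw [← hm, ZMod.natCast_zmod_val]
      push_cast
      rw [hCcast]
    have h2 : ((C ^ 2 - 1 - ((p ^ (α - 1) * m : ℕ) : ℤ) : ℤ) : ZMod (p ^ α)) = 0 := by
      push_cast
      push_cast at h1
      linear_combination h1
    obtain ⟨z, hz⟩ := (ZMod.intCast_zmod_eq_zero_iff_dvd _ _).mp h2
    refine ⟨(m : ℤ) + p * z, ?_⟩
    have hpow : (p : ℤ) ^ α = p ^ (α - 1) * p := by rw [← pow_succ]; congr 1; omega
    push_cast at hz
    rw [hpow] at hz
    push_cast
    linarith [hz]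
  have hfac : ((p : ℤ) ^ (α - 1)) ∣ (C - 1) * (C + 1) := by
    rw [show (C - 1) * (C + 1) = C ^ 2 - 1 by ring]; exact hdvd
  have hPrime : Prime (p : ℤ) := Nat.prime_iff_prime_int.mp hpp.out
  have hsplit : ((p : ℤ) ^ (α - 1)) ∣ (C - 1) ∨ ((p : ℤ) ^ (α - 1)) ∣ (C + 1) := by
    by_cases h1 : (p : ℤ) ∣ (C - 1)
    · left
      have h2 : ¬ (p : ℤ) ∣ (C + 1) := by
        intro h2
        have hd2 : (p : ℤ) ∣ 2 := by
          have := dvd_sub h2 h1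
          simpa using this
        have := Int.le_of_dvd (by norm_num) hd2
        omega
      exact (IsCoprime.pow_left (hPrime.coprime_iff_not_dvd.mpr h2)).dvd_of_dvd_mul_right hfac
    · right
      exact (IsCoprime.pow_left (hPrime.coprime_iff_not_dvd.mpr h1)).dvd_of_dvd_mul_left hfac
  have hxq_cast : ∀ z : ℤ, (((p : ℤ) ^ (α - 1) * z : ℤ) : ZMod (p ^ α)) = xq p α * ((z : ℤ) : ZMod (p ^ α)) := by
    intro z; rw [xq]; push_cast; ring
  rcases hsplit with ⟨z, hz⟩ | ⟨z, hz⟩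
  · -- c = u1 ^ t
    refine ⟨(z % p).toNat, ?_, Or.inl (Units.ext ?_)⟩
    · have h1 : z % p < p := Int.emod_lt_of_pos z (by exact_mod_cast hpp.out.pos)
      omega
    · rw [u1_pow_cast hα, ← hCcast,
        show C = 1 + (p : ℤ) ^ (α - 1) * z by linarith [hz]]
      push_cast [hxq_cast]
      rw [xq_mul_int hα z]
      push_cast
      ring
  · -- c = - u1 ^ t
    refine ⟨((-z) % p).toNat, ?_, Or.inr (Units.ext ?_)⟩
    · have h1 : (-z) % p < p := Int.emod_lt_of_pos (-z) (by exact_mod_cast hpp.out.pos)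
      omega
    · rw [Units.val_neg, u1_pow_cast hα, ← hCcast,
        show C = -1 + (p : ℤ) ^ (α - 1) * z by linarith [hz]]
      push_cast [hxq_cast]
      rw [show xq p α * ((z : ℤ) : ZMod (p ^ α)) = -(xq p α * ((-z : ℤ) : ZMod (p ^ α))) by push_cast; ring,
        xq_mul_int hα (-z)]
      push_cast
      ring

section Gsq
variable {q : ℕ} [NeZero q]

lemma conj_char (χ : DirichletCharacter ℂ q) (b : (ZMod q)ˣ) :
    (starRingEnd ℂ) (χ b) = χ ↑b⁻¹ := by
  rw [show ((starRingEnd ℂ) (χ b)) = star (χ (b : ZMod q)) from rfl, MulChar.star_apply',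
    MulChar.inv_apply, Ring.inverse_unit]

lemma conj_psi (z : ZMod q) :
    (starRingEnd ℂ) (ZMod.stdAddChar z) = ZMod.stdAddChar (-z) := by
  have hR : 0 < ringChar (ZMod q) := by
    rw [ZMod.ringChar_zmod_n]; exact Nat.pos_of_ne_zero (NeZero.ne q)
  rw [AddChar.starComp_apply hR, AddChar.inv_apply]

lemma Gsq (n : ℤ) (χ : DirichletCharacter ℂ q) :
    Ggen n q χ * (starRingEnd ℂ) (Ggen n q χ) = ∑ c : (ZMod q)ˣ, χ c * Fc q n c := by
  rw [Ggen_eq, map_sum, Finset.sum_mul_sum]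
  have conj_term : ∀ b : (ZMod q)ˣ,
      (starRingEnd ℂ) (χ b * ZMod.stdAddChar ((n : ZMod q) * (b : ZMod q) ^ 2))
        = χ ↑b⁻¹ * ZMod.stdAddChar (-((n : ZMod q) * (b : ZMod q) ^ 2)) := by
    intro b
    rw [map_mul, conj_char, conj_psi]
  calc ∑ a : (ZMod q)ˣ, ∑ b : (ZMod q)ˣ,
        (χ a * ZMod.stdAddChar ((n : ZMod q) * (a : ZMod q) ^ 2)) *
          (starRingEnd ℂ) (χ b * ZMod.stdAddChar ((n : ZMod q) * (b : ZMod q) ^ 2))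
      = ∑ b : (ZMod q)ˣ, ∑ a : (ZMod q)ˣ,
        (χ a * ZMod.stdAddChar ((n : ZMod q) * (a : ZMod q) ^ 2)) *
          (χ ↑b⁻¹ * ZMod.stdAddChar (-((n : ZMod q) * (b : ZMod q) ^ 2))) := by
        rw [Finset.sum_comm]
        exact Finset.sum_congr rfl fun b _ => Finset.sum_congr rfl fun a _ => by rw [conj_term]
    _ = ∑ b : (ZMod q)ˣ, ∑ c : (ZMod q)ˣ,
        (χ ↑(c * b) * ZMod.stdAddChar ((n : ZMod q) * ((c * b : (ZMod q)ˣ) : ZMod q) ^ 2)) *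
          (χ ↑b⁻¹ * ZMod.stdAddChar (-((n : ZMod q) * (b : ZMod q) ^ 2))) := by
        refine Finset.sum_congr rfl fun b _ => ?_
        exact (Fintype.sum_bijective (· * b) (Group.mulRight_bijective b) _ _ fun c => rfl).symm
    _ = ∑ c : (ZMod q)ˣ, ∑ b : (ZMod q)ˣ,
        (χ ↑(c * b) * ZMod.stdAddChar ((n : ZMod q) * ((c * b : (ZMod q)ˣ) : ZMod q) ^ 2)) *
          (χ ↑b⁻¹ * ZMod.stdAddChar (-((n : ZMod q) * (b : ZMod q) ^ 2))) := Finset.sum_comm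
    _ = ∑ c : (ZMod q)ˣ, χ c * Fc q n c := by
        refine Finset.sum_congr rfl fun c _ => ?_
        rw [Fc, Finset.mul_sum]
        refine Finset.sum_congr rfl fun b _ => ?_
        have h1 : (χ ↑(c * b)) * (χ ↑b⁻¹) = χ ↑c := by
          rw [← map_mul, ← Units.val_mul, mul_inv_cancel_right]
        have h2 : ZMod.stdAddChar ((n : ZMod q) * ((c * b : (ZMod q)ˣ) : ZMod q) ^ 2) *
            ZMod.stdAddChar (-((n : ZMod q) * (b : ZMod q) ^ 2))
            = ZMod.stdAddChar ((n : ZMod q) * ((c : ZMod q) ^ 2 - 1) * (b : ZMod q) ^ 2) := by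
          rw [← AddChar.map_add_eq_mul]
          congr 1
          rw [Units.val_mul]
          ring
        calc (χ ↑(c * b) * ZMod.stdAddChar ((n : ZMod q) * ((c * b : (ZMod q)ˣ) : ZMod q) ^ 2)) *
              (χ ↑b⁻¹ * ZMod.stdAddChar (-((n : ZMod q) * (b : ZMod q) ^ 2)))
            = (χ ↑(c * b) * χ ↑b⁻¹) * (ZMod.stdAddChar ((n : ZMod q) * ((c * b : (ZMod q)ˣ) : ZMod q) ^ 2) *
              ZMod.stdAddChar (-((n : ZMod q) * (b : ZMod q) ^ 2))) := by ring
          _ = χ ↑c * ZMod.stdAddChar ((n : ZMod q) * ((c : ZMod q) ^ 2 - 1) * (b : ZMod q) ^ 2) := by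
              rw [h1, h2]

end Gsq

lemma card_fiber {G H : Type*} [Group G] [Fintype G] [DecidableEq G] [Group H] [DecidableEq H]
    (f : G →* H) (g : G) :
    (univ.filter (fun x => f x = f g)).card = (univ.filter (fun x => f x = 1)).card := by
  refine Finset.card_bij' (fun x _ => g⁻¹ * x) (fun y _ => g * y) ?_ ?_ ?_ ?_
  · intro x hx
    simp only [Finset.mem_filter, Finset.mem_univ, true_and] at hx ⊢
    rw [map_mul, map_inv, hx, inv_mul_cancel]
  · intro y hy
    simp only [Finset.mem_filter, Finset.mem_univ, true_and] at hy ⊢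
    rw [map_mul, hy, mul_one]
  · intro x _; group
  · intro y _; group

section counting
variable {p : ℕ} [hpp : Fact p.Prime] {α : ℕ}

lemma card_ker_unitsMap (hα : 2 ≤ α) :
    (univ.filter (fun b : (ZMod (p ^ α))ˣ =>
      ZMod.unitsMap (dvd_pow_self p (by omega : α ≠ 0)) b = 1)).card = p ^ (α - 1) := by
  classical
  set μ := ZMod.unitsMap (dvd_pow_self p (by omega : α ≠ 0)) with hμ
  set K := (univ.filter (fun b : (ZMod (p ^ α))ˣ => μ b = 1)).card with hK
  have hsurj : Function.Surjective μ := ZMod.unitsMap_surjective _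
  have hcard : Fintype.card (ZMod (p ^ α))ˣ = Fintype.card (ZMod p)ˣ * K := by
    rw [← Finset.card_univ,
      Finset.card_eq_sum_card_fiberwise (fun x (_ : x ∈ univ) => Finset.mem_univ (μ x))]
    calc ∑ y : (ZMod p)ˣ, (univ.filter (fun b : (ZMod (p ^ α))ˣ => μ b = y)).card
        = ∑ _y : (ZMod p)ˣ, K := by
          refine Finset.sum_congr rfl fun y _ => ?_
          obtain ⟨g, hg⟩ := hsurj y
          rw [← hg, card_fiber μ g]
      _ = Fintype.card (ZMod p)ˣ * K := by
          rw [Finset.sum_const, Finset.card_univ, smul_eq_mul]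
  have h1 : Fintype.card (ZMod (p ^ α))ˣ = (p ^ α).totient := ZMod.card_units_eq_totient _
  have h2 : Fintype.card (ZMod p)ˣ = p.totient := ZMod.card_units_eq_totient _
  have h3 : (p ^ α).totient = p ^ (α - 1) * (p - 1) := by
    rw [Nat.totient_prime_pow hpp.out (by omega : 0 < α)]
  have h4 : p.totient = p - 1 := Nat.totient_prime hpp.out
  rw [h1, h2, h3, h4] at hcard
  have hp2 : 2 ≤ p := hpp.out.two_le
  have h5 : (p - 1) * K = (p - 1) * p ^ (α - 1) := by
    rw [← hcard]; ring
  exact (Nat.eq_of_mul_eq_mul_left (by omega) h5)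

end counting

section dich
variable {p : ℕ} [hpp : Fact p.Prime] {α : ℕ}

lemma N_dichotomy (hp : 3 ≤ p) (hα : 2 ≤ α) {n : ℤ} (hn : IsCoprime n (p : ℤ)) (ω : ℂ) :
    (univ.filter (fun b : (ZMod (p ^ α))ˣ =>
        ω * ZMod.stdAddChar (xq p α * (2 * (n : ZMod (p ^ α)) * (b : ZMod (p ^ α)) ^ 2)) = 1)).card = 0 ∨
    (univ.filter (fun b : (ZMod (p ^ α))ˣ =>
        ω * ZMod.stdAddChar (xq p α * (2 * (n : ZMod (p ^ α)) * (b : ZMod (p ^ α)) ^ 2)) = 1)).card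
      = 2 * p ^ (α - 1) := by
  classical
  set zb : (ZMod (p ^ α))ˣ → ℂ := fun b =>
    ZMod.stdAddChar (xq p α * (2 * (n : ZMod (p ^ α)) * (b : ZMod (p ^ α)) ^ 2)) with hzb
  set S := univ.filter (fun b : (ZMod (p ^ α))ˣ => ω * zb b = 1) with hS
  rcases Finset.eq_empty_or_nonempty S with h | ⟨b₀, hb₀⟩
  · left; rw [hS] at h ⊢; rw [h]; rfl
  right
  rw [hS] at hb₀; simp only [Finset.mem_filter, Finset.mem_univ, true_and] at hb₀
  have hωne : ω ≠ 0 := fun h => by simp [h] at hb₀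
  -- the ring hom to ZMod p
  set π := ZMod.castHom (dvd_pow_self p (by omega : α ≠ 0)) (ZMod p) with hπ
  set μ := ZMod.unitsMap (dvd_pow_self p (by omega : α ≠ 0)) with hμ
  have hμπ : ∀ b : (ZMod (p ^ α))ˣ, ((μ b : (ZMod p)ˣ) : ZMod p) = π (b : ZMod (p ^ α)) := by
    intro b; rw [hμ, ZMod.unitsMap]; rfl
  have hp2 : ((2 : ZMod p)) ≠ 0 := by
    have : ((2 : ℕ) : ZMod p) ≠ 0 := by
      rw [Ne, ZMod.natCast_eq_zero_iff]
      intro h; have := Nat.le_of_dvd (by norm_num) h; omega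
    simpa using this
  have hpn : ((n : ZMod p)) ≠ 0 := by
    rw [Ne, ZMod.intCast_zmod_eq_zero_iff_dvd]
    intro h
    have := IsCoprime.isUnit_of_dvd' hn h dvd_rfl
    rw [Int.isUnit_iff] at this
    omega
  -- membership criterion
  have hcrit : ∀ b : (ZMod (p ^ α))ˣ, (ω * zb b = 1) ↔ (μ b = μ b₀ ∨ μ b = - μ b₀) := by
    intro b
    have h1 : (ω * zb b = 1) ↔ zb b = zb b₀ := by
      constructor
      · intro h; exact mul_left_cancel₀ hωne (h.trans hb₀.symm)
      · intro h; rw [h]; exact hb₀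
    rw [h1]
    have h2 : zb b = zb b₀ ↔
        xq p α * (2 * (n : ZMod (p ^ α)) * ((b : ZMod (p ^ α)) ^ 2 - (b₀ : ZMod (p ^ α)) ^ 2)) = 0 := by
      rw [hzb]
      simp only []
      constructor
      · intro h
        have := ZMod.injective_stdAddChar (N := p ^ α) h
        rw [show xq p α * (2 * (n : ZMod (p ^ α)) * ((b : ZMod (p ^ α)) ^ 2 - (b₀ : ZMod (p ^ α)) ^ 2))
          = xq p α * (2 * (n : ZMod (p ^ α)) * (b : ZMod (p ^ α)) ^ 2)
            - xq p α * (2 * (n : ZMod (p ^ α)) * (b₀ : ZMod (p ^ α)) ^ 2) by ring, this, sub_self]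
      · intro h
        have heq : xq p α * (2 * (n : ZMod (p ^ α)) * (b : ZMod (p ^ α)) ^ 2)
            = xq p α * (2 * (n : ZMod (p ^ α)) * (b₀ : ZMod (p ^ α)) ^ 2) := by
          linear_combination h
        rw [heq]
    rw [h2, xq, pmul_zero_iff (by omega : 1 ≤ α)]
    rw [show ZMod.castHom (dvd_pow_self p (by omega : α ≠ 0)) (ZMod p) = π from rfl]
    rw [map_mul, map_mul, map_sub, map_pow, map_pow, map_ofNat, map_intCast]
    constructor
    · intro h
      have h3 : π (b : ZMod (p ^ α)) ^ 2 - π (b₀ : ZMod (p ^ α)) ^ 2 = 0 := by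
        rcases mul_eq_zero.mp h with h | h
        · exact absurd h (mul_ne_zero hp2 hpn)
        · exact h
      have h4 : (π (b : ZMod (p ^ α)) - π (b₀ : ZMod (p ^ α)))
          * (π (b : ZMod (p ^ α)) + π (b₀ : ZMod (p ^ α))) = 0 := by linear_combination h3
      rcases mul_eq_zero.mp h4 with h5 | h5
      · left
        apply Units.ext
        rw [hμπ, hμπ]
        linear_combination h5
      · right
        apply Units.ext
        rw [hμπ, Units.val_neg, hμπ]
        linear_combination h5
    · intro h
      have h6 : π (b : ZMod (p ^ α)) ^ 2 = π (b₀ : ZMod (p ^ α)) ^ 2 := by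
        rcases h with h | h
        · rw [← hμπ b, ← hμπ b₀, h]
        · rw [← hμπ b, ← hμπ b₀, h, Units.val_neg, neg_sq]
      rw [h6, sub_self, mul_zero]
  -- rewrite the filter
  have hsplit : S = (univ.filter (fun b => μ b = μ b₀)) ∪ (univ.filter (fun b => μ b = - μ b₀)) := by
    rw [hS]
    ext b
    simp only [Finset.mem_filter, Finset.mem_univ, true_and, Finset.mem_union]
    exact hcrit b
  have hdisj : Disjoint (univ.filter (fun b => μ b = μ b₀)) (univ.filter (fun b => μ b = - μ b₀)) := by
    rw [Finset.disjoint_filter]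
    intro b _ h1 h2
    rw [h1] at h2
    have : ((μ b₀ : (ZMod p)ˣ) : ZMod p) = -((μ b₀ : (ZMod p)ˣ) : ZMod p) := by
      conv_lhs => rw [h2, Units.val_neg]
    have h3 : (2 : ZMod p) * ((μ b₀ : (ZMod p)ˣ) : ZMod p) = 0 := by linear_combination this
    rcases mul_eq_zero.mp h3 with h | h
    · exact hp2 h
    · exact (μ b₀).isUnit.ne_zero h
  rw [hsplit, Finset.card_union_of_disjoint hdisj]
  -- second fiber is nonempty: find preimage of -μ b₀
  obtain ⟨b₁, hb₁⟩ := ZMod.unitsMap_surjective (n := p) (dvd_pow_self p (by omega : α ≠ 0)) (- μ b₀)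
  rw [show (univ.filter (fun b => μ b = - μ b₀)) = (univ.filter (fun b => μ b = μ b₁)) by rw [hb₁]]
  rw [card_fiber μ b₀, card_fiber μ b₁, card_ker_unitsMap hα]
  ring

end dich

section pointwise
variable {p : ℕ} [hpp : Fact p.Prime] {α : ℕ}

lemma two_xq_ne (hp : 3 ≤ p) (hα : 2 ≤ α) : (2 : ZMod (p ^ α)) * xq p α ≠ 0 := by
  rw [xq, show ((2 : ZMod (p ^ α)) * (p : ZMod (p ^ α)) ^ (α - 1))
      = ((2 * p ^ (α - 1) : ℕ) : ZMod (p ^ α)) by push_cast; ring,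
    Ne, ZMod.natCast_eq_zero_iff]
  intro h
  have hqe : p ^ α = p ^ (α - 1) * p := by rw [← pow_succ]; congr 1; omega
  rw [hqe, mul_comm 2 (p ^ (α - 1)), Nat.mul_dvd_mul_iff_left (pow_pos hpp.out.pos _)] at h
  have := Nat.le_of_dvd (by norm_num) h
  omega

lemma Fc_neg {q : ℕ} [NeZero q] (n : ℤ) (c : (ZMod q)ˣ) : Fc q n (-c) = Fc q n c := by
  rw [Fc, Fc]
  refine Finset.sum_congr rfl fun b _ => ?_
  rw [Units.val_neg, neg_sq]

lemma pointwise_dichotomy (hp : 3 ≤ p) (hα : 2 ≤ α) {n : ℤ} (hn : IsCoprime n (p : ℤ))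
    (χ : DirichletCharacter ℂ (p ^ α)) :
    (∑ c : (ZMod (p ^ α))ˣ, χ c * Fc (p ^ α) n c) = 0 ∨
    (∑ c : (ZMod (p ^ α))ˣ, χ c * Fc (p ^ α) n c) = 4 * (p : ℂ) ^ α := by
  classical
  set A : Finset (ZMod (p ^ α))ˣ := (range p).image (fun t => u1 (p := p) hα ^ t) with hA
  set B : Finset (ZMod (p ^ α))ˣ := (range p).image (fun t => - u1 (p := p) hα ^ t) with hB
  set f : (ZMod (p ^ α))ˣ → ℂ := fun c => χ c * Fc (p ^ α) n c with hf
  -- step 1 : restrict the sum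
  have step1 : ∑ c : (ZMod (p ^ α))ˣ, f c = ∑ c ∈ A ∪ B, f c := by
    refine (Finset.sum_subset (Finset.subset_univ _) ?_).symm
    intro c _ hc
    rw [hf]
    simp only []
    rw [Fc_eq_zero hp hα hn c ?_, mul_zero]
    intro hdvd
    obtain ⟨t, ht, hor⟩ := unit_classification hp hα c hdvd
    refine hc (Finset.mem_union.mpr ?_)
    rcases hor with h | h
    · exact Or.inl (Finset.mem_image.mpr ⟨t, Finset.mem_range.mpr ht, h.symm⟩)
    · exact Or.inr (Finset.mem_image.mpr ⟨t, Finset.mem_range.mpr ht, h.symm⟩)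
  -- disjointness of A and B
  have hABdisj : Disjoint A B := by
    rw [Finset.disjoint_left]
    intro a haA haB
    obtain ⟨t, _, hat⟩ := Finset.mem_image.mp haA
    obtain ⟨s, _, has⟩ := Finset.mem_image.mp haB
    have hcast : ((u1 (p := p) hα ^ t : (ZMod (p ^ α))ˣ) : ZMod (p ^ α))
        = ((- u1 (p := p) hα ^ s : (ZMod (p ^ α))ˣ) : ZMod (p ^ α)) := by rw [hat, has]
    rw [Units.val_neg, u1_pow_cast hα, u1_pow_cast hα] at hcast
    have h2 : (2 : ZMod (p ^ α)) = -((t : ZMod (p ^ α)) + s) * xq p α := by linear_combination hcast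
    have h3 : (2 : ZMod (p ^ α)) * xq p α = 0 := by
      calc (2 : ZMod (p ^ α)) * xq p α = -((t : ZMod (p ^ α)) + s) * (xq p α * xq p α) := by
            rw [h2]; ring
      _ = 0 := by rw [← sq, xq_sq hα, mul_zero]
    exact two_xq_ne hp hα h3
  -- injectivity on range p
  have hinjA : ∀ x ∈ range p, ∀ y ∈ range p,
      u1 (p := p) hα ^ x = u1 (p := p) hα ^ y → x = y := by
    intro x hx y hy hxy
    have h1 : x ∈ Set.Iio (orderOf (u1 (p := p) hα)) := by
      rw [Set.mem_Iio, orderOf_u1 hα]; exact Finset.mem_range.mp hx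
    have h2 : y ∈ Set.Iio (orderOf (u1 (p := p) hα)) := by
      rw [Set.mem_Iio, orderOf_u1 hα]; exact Finset.mem_range.mp hy
    exact pow_injOn_Iio_orderOf h1 h2 hxy
  have hinjB : ∀ x ∈ range p, ∀ y ∈ range p,
      - u1 (p := p) hα ^ x = - u1 (p := p) hα ^ y → x = y := by
    intro x hx y hy hxy
    exact hinjA x hx y hy (neg_inj.mp hxy)
  -- the base quantities
  set ω : ℂ := χ ((u1 (p := p) hα : (ZMod (p ^ α))ˣ) : ZMod (p ^ α)) with hω
  set zb : (ZMod (p ^ α))ˣ → ℂ := fun b =>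
    ZMod.stdAddChar (xq p α * (2 * (n : ZMod (p ^ α)) * (b : ZMod (p ^ α)) ^ 2)) with hzb
  -- step 4/5 : value on A and B elements
  have valA : ∀ t : ℕ, f (u1 (p := p) hα ^ t) = ∑ b : (ZMod (p ^ α))ˣ, (ω * zb b) ^ t := by
    intro t
    have hχ : χ ((u1 (p := p) hα ^ t : (ZMod (p ^ α))ˣ) : ZMod (p ^ α)) = ω ^ t := by
      rw [Units.val_pow_eq_pow_val, map_pow, hω]
    have hFc : Fc (p ^ α) n (u1 (p := p) hα ^ t) = ∑ b : (ZMod (p ^ α))ˣ, zb b ^ t := by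
      rw [Fc]
      refine Finset.sum_congr rfl fun b _ => ?_
      rw [u1_pow_cast hα]
      have harg : (n : ZMod (p ^ α)) * ((1 + (t : ZMod (p ^ α)) * xq p α) ^ 2 - 1) * (b : ZMod (p ^ α)) ^ 2
          = (t : ZMod (p ^ α)) * (xq p α * (2 * (n : ZMod (p ^ α)) * (b : ZMod (p ^ α)) ^ 2))
            + ((t : ZMod (p ^ α)) ^ 2 * ((n : ZMod (p ^ α)) * (b : ZMod (p ^ α)) ^ 2)) * (xq p α ^ 2) := by
        ring
      rw [harg, xq_sq hα, mul_zero, add_zero,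
        show ((t : ZMod (p ^ α)) * (xq p α * (2 * (n : ZMod (p ^ α)) * (b : ZMod (p ^ α)) ^ 2)))
          = t • (xq p α * (2 * (n : ZMod (p ^ α)) * (b : ZMod (p ^ α)) ^ 2)) by rw [nsmul_eq_mul],
        AddChar.map_nsmul_eq_pow]
    rw [hf]
    simp only []
    rw [hχ, hFc, Finset.mul_sum]
    exact Finset.sum_congr rfl fun b _ => by rw [mul_pow]
  have valB : ∀ t : ℕ, f (- u1 (p := p) hα ^ t)
      = χ (-1 : ZMod (p ^ α)) * ∑ b : (ZMod (p ^ α))ˣ, (ω * zb b) ^ t := by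
    intro t
    have h1 : ((- u1 (p := p) hα ^ t : (ZMod (p ^ α))ˣ) : ZMod (p ^ α))
        = (-1 : ZMod (p ^ α)) * ((u1 (p := p) hα ^ t : (ZMod (p ^ α))ˣ) : ZMod (p ^ α)) := by
      rw [Units.val_neg]; ring
    rw [hf]
    simp only []
    rw [h1, map_mul, Fc_neg, mul_assoc]
    rw [← valA t, hf]
  -- step 6 : geometric sums
  have hroot : ∀ b : (ZMod (p ^ α))ˣ, (ω * zb b) ^ p = 1 := by
    intro b
    rw [mul_pow]
    have h1 : ω ^ p = 1 := by
      rw [hω, ← map_pow, ← Units.val_pow_eq_pow_val, u1_pow_p hα, Units.val_one, map_one]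
    have h2 : zb b ^ p = 1 := by
      rw [hzb]
      simp only []
      rw [← AddChar.map_nsmul_eq_pow, nsmul_eq_mul, ← mul_assoc, p_mul_xq hα, zero_mul,
        AddChar.map_zero_eq_one]
    rw [h1, h2, one_mul]
  -- assemble
  have main : ∑ c : (ZMod (p ^ α))ˣ, f c
      = (1 + χ (-1 : ZMod (p ^ α))) *
        (((univ.filter (fun b : (ZMod (p ^ α))ˣ =>
          ω * ZMod.stdAddChar (xq p α * (2 * (n : ZMod (p ^ α)) * (b : ZMod (p ^ α)) ^ 2)) = 1)).card : ℂ)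
          * (p : ℂ)) := by
    rw [step1, Finset.sum_union hABdisj, hA, hB, Finset.sum_image hinjA, Finset.sum_image hinjB]
    have : ∀ t ∈ range p, f (u1 (p := p) hα ^ t) + f (- u1 (p := p) hα ^ t)
        = (1 + χ (-1 : ZMod (p ^ α))) * ∑ b : (ZMod (p ^ α))ˣ, (ω * zb b) ^ t := by
      intro t _
      rw [valA t, valB t]; ring
    rw [← Finset.sum_add_distrib, Finset.sum_congr rfl this, ← Finset.mul_sum]
    congr 1
    rw [Finset.sum_comm]
    calc ∑ b : (ZMod (p ^ α))ˣ, ∑ t ∈ range p, (ω * zb b) ^ t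
        = ∑ b : (ZMod (p ^ α))ˣ, if ω * zb b = 1 then (p : ℂ) else 0 := by
          exact Finset.sum_congr rfl fun b _ => geom_sum_root _ _ (hroot b)
      _ = ∑ b ∈ univ.filter (fun b : (ZMod (p ^ α))ˣ => ω * zb b = 1), (p : ℂ) := by
          rw [Finset.sum_filter]
      _ = ((univ.filter (fun b : (ZMod (p ^ α))ˣ =>
            ω * ZMod.stdAddChar (xq p α * (2 * (n : ZMod (p ^ α)) * (b : ZMod (p ^ α)) ^ 2)) = 1)).card : ℂ)
          * (p : ℂ) := by
          rw [Finset.sum_const, nsmul_eq_mul]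
  rw [main]
  -- dichotomies
  have hχ1 : χ (-1 : ZMod (p ^ α)) = 1 ∨ χ (-1 : ZMod (p ^ α)) = -1 := by
    refine mul_self_eq_one_iff.mp ?_
    rw [← map_mul]
    norm_num
  rcases hχ1 with h | h
  · rcases N_dichotomy hp hα hn ω with hN | hN
    · left; rw [hN]; norm_num
    · right
      rw [h, hN]
      push_cast
      have : ((p : ℂ)) ^ (α - 1) * (p : ℂ) = (p : ℂ) ^ α := by
        rw [← pow_succ]; congr 1; omega
      rw [← this]
      ring
  · left
    rw [h]
    norm_num

end pointwise

section orth
variable {q : ℕ} [NeZero q]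

lemma sum_Gsq (n : ℤ) :
    ∑ χ : DirichletCharacter ℂ q, Ggen n q χ * (starRingEnd ℂ) (Ggen n q χ)
      = (q.totient : ℂ) ^ 2 := by
  classical
  have expand : ∀ χ : DirichletCharacter ℂ q,
      Ggen n q χ * (starRingEnd ℂ) (Ggen n q χ)
        = ∑ a : (ZMod q)ˣ, ∑ b : (ZMod q)ˣ,
            (χ a * χ ↑b⁻¹) *
              (ZMod.stdAddChar ((n : ZMod q) * (a : ZMod q) ^ 2)
                * ZMod.stdAddChar (-((n : ZMod q) * (b : ZMod q) ^ 2))) := by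
    intro χ
    rw [Ggen_eq, map_sum, Finset.sum_mul_sum]
    refine Finset.sum_congr rfl fun a _ => Finset.sum_congr rfl fun b _ => ?_
    rw [(starRingEnd ℂ).map_mul, conj_char, conj_psi]
    ring
  calc ∑ χ : DirichletCharacter ℂ q, Ggen n q χ * (starRingEnd ℂ) (Ggen n q χ)
      = ∑ a : (ZMod q)ˣ, ∑ b : (ZMod q)ˣ,
          (∑ χ : DirichletCharacter ℂ q, χ ((b : ZMod q))⁻¹ * χ a) *
            (ZMod.stdAddChar ((n : ZMod q) * (a : ZMod q) ^ 2)
              * ZMod.stdAddChar (-((n : ZMod q) * (b : ZMod q) ^ 2))) := by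
        rw [Finset.sum_congr rfl (fun χ _ => expand χ), Finset.sum_comm]
        refine Finset.sum_congr rfl fun a _ => ?_
        rw [Finset.sum_comm]
        refine Finset.sum_congr rfl fun b _ => ?_
        rw [Finset.sum_mul]
        refine Finset.sum_congr rfl fun χ _ => ?_
        rw [ZMod.inv_coe_unit]
        ring
    _ = ∑ a : (ZMod q)ˣ, ∑ b : (ZMod q)ˣ,
          (if ((b : ZMod q)) = ((a : ZMod q)) then (q.totient : ℂ) else 0) *
            (ZMod.stdAddChar ((n : ZMod q) * (a : ZMod q) ^ 2)
              * ZMod.stdAddChar (-((n : ZMod q) * (b : ZMod q) ^ 2))) := by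
        refine Finset.sum_congr rfl fun a _ => Finset.sum_congr rfl fun b _ => ?_
        rw [DirichletCharacter.sum_char_inv_mul_char_eq ℂ (b.isUnit) (a : ZMod q)]
    _ = ∑ a : (ZMod q)ˣ, (q.totient : ℂ) := by
        refine Finset.sum_congr rfl fun a _ => ?_
        have : ∀ b : (ZMod q)ˣ,
            (if ((b : ZMod q)) = ((a : ZMod q)) then (q.totient : ℂ) else 0) *
              (ZMod.stdAddChar ((n : ZMod q) * (a : ZMod q) ^ 2)
                * ZMod.stdAddChar (-((n : ZMod q) * (b : ZMod q) ^ 2)))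
            = if b = a then (q.totient : ℂ) *
                (ZMod.stdAddChar ((n : ZMod q) * (a : ZMod q) ^ 2)
                  * ZMod.stdAddChar (-((n : ZMod q) * (b : ZMod q) ^ 2))) else 0 := by
          intro b
          by_cases hba : b = a
          · rw [if_pos (by rw [hba]), if_pos hba]
          · rw [if_neg (fun h => hba (Units.ext h)), if_neg hba, zero_mul]
        rw [Finset.sum_congr rfl fun b _ => this b, Finset.sum_ite_eq' univ a]
        rw [if_pos (Finset.mem_univ a), ← AddChar.map_add_eq_mul, add_neg_cancel,
          AddChar.map_zero_eq_one, mul_one]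
    _ = (q.totient : ℂ) ^ 2 := by
        rw [Finset.sum_const, Finset.card_univ, ZMod.card_units_eq_totient, nsmul_eq_mul, sq]

end orth

/-- for an odd prime `p`, `α ≥ 2`, `m ≥ 2`, and `n` coprime to `p`,
`Σ_{χ mod p^α} |G(n,χ;p^α)|^{2m} = 4^{m-1}·φ(p^α)²·p^{(m-1)α}`. -/
theorem sum_Ggen_pow_prime_power (p : ℕ) [Fact p.Prime] (hp : 3 ≤ p)
    (α : ℕ) (hα : 2 ≤ α) (m : ℕ) (hm : 2 ≤ m) (n : ℤ) (hn : IsCoprime n (p : ℤ)) :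
    (∑ χ : DirichletCharacter ℂ (p ^ α), ‖Ggen n (p ^ α) χ‖ ^ (2 * m)) =
      4 ^ (m - 1) * (Nat.totient (p ^ α) : ℝ) ^ 2 * (p : ℝ) ^ ((m - 1) * α) := by
  classical
  -- pointwise dichotomy for |G|²
  have key : ∀ χ : DirichletCharacter ℂ (p ^ α),
      (‖Ggen n (p ^ α) χ‖) ^ 2 = 0 ∨
      (‖Ggen n (p ^ α) χ‖) ^ 2 = 4 * (p : ℝ) ^ α := by
    intro χ
    have h := pointwise_dichotomy hp hα hn χ
    rw [← Gsq, Complex.mul_conj] at h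
    rw [Complex.sq_norm]
    rcases h with h | h
    · left; exact_mod_cast h
    · right
      have h2 : ((Complex.normSq (Ggen n (p ^ α) χ) : ℝ) : ℂ) = ((4 * (p : ℝ) ^ α : ℝ) : ℂ) := by
        rw [h]; push_cast; ring
    

      exact_mod_cast h2
  -- the second moment
  have sum2 : ∑ χ : DirichletCharacter ℂ (p ^ α), (‖Ggen n (p ^ α) χ‖) ^ 2
      = ((p ^ α).totient : ℝ) ^ 2 := by
    have h := sum_Gsq (q := p ^ α) n
    have h2 : ((∑ χ : DirichletCharacter ℂ (p ^ α), (‖Ggen n (p ^ α) χ‖) ^ 2 : ℝ) : ℂ)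
        = ((((p ^ α).totient : ℝ) ^ 2 : ℝ) : ℂ) := by
      push_cast
      rw [← h]
      refine Finset.sum_congr rfl fun χ _ => ?_
      rw [Complex.mul_conj, ← Complex.sq_norm]
      push_cast
      ring
    exact_mod_cast h2
  -- each term of the 2m-th moment
  have hterm : ∀ χ : DirichletCharacter ℂ (p ^ α),
      ‖Ggen n (p ^ α) χ‖ ^ (2 * m)
        = (4 * (p : ℝ) ^ α) ^ (m - 1) * (‖Ggen n (p ^ α) χ‖) ^ 2 := by
    intro χ
    rw [pow_mul]
    rcases key χ with h | h
    · rw [h, zero_pow (by omega : m ≠ 0), mul_zero]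
    · rw [h]
      conv_lhs => rw [show m = (m - 1) + 1 by omega]
      rw [pow_succ]
  rw [Finset.sum_congr rfl fun χ _ => hterm χ, ← Finset.mul_sum, sum2]
  rw [mul_pow, ← pow_mul, Nat.mul_comm α (m - 1)]
  ring
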